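/- (Bracketing entropy of the quadratic polynomial gating MoE class.) Suppose the expert function h is bounded and Lipschitz in η uniformly in x, Θ is compact, and μ is a probability distribution on ℝ^d with bounded support. Then there exist constants C, C' > 0 such that for every ε ∈ (0, 1/2] there exist k ≤ (C/ε)^{C'} pairs of functions (L_i, U_i), i = 1,…,k, with L_i ≤ U_i pointwise and ‖U_i − L_i‖_{L²(μ)} ≤ ε, such that every f_G ∈ F_N(Θ) satisfies L_i ≤ f_G ≤ U_i pointwise for some i; equivalently, the L²(μ) bracketing entropy satisfies H_B(ε, F_N(Θ), ‖·‖_{L²(μ)}) ≲ log(1/ε). -/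

import Mathlib

open MeasureTheory Filter Finset

noncomputable section

/-- Quadratic form `xᵀ A x`. -/
def qform {d : ℕ} (A : Fin d → Fin d → ℝ) (x : Fin d → ℝ) : ℝ :=
  ∑ u, ∑ v, A u v * x u * x v

/-- Dot product `bᵀ x`. -/
def dotp {d : ℕ} (b x : Fin d → ℝ) : ℝ := ∑ u, b u * x u

/-- A mixing measure with `k` atoms for the quadratic polynomial gating MoE
(weights are `exp (c i)`). -/
structure PolyMix (d q k : ℕ) where
  A : Fin k → Fin d → Fin d → ℝ
  b : Fin k → Fin d → ℝ
  c : Fin k → ℝ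
  η : Fin k → Fin q → ℝ

/-- The quadratic-polynomial-gated MoE regression function `f_G`. -/
def polyMoE {d q k : ℕ} (h : (Fin d → ℝ) → (Fin q → ℝ) → ℝ) (G : PolyMix d q k)
    (x : Fin d → ℝ) : ℝ :=
  ∑ i, (Real.exp (qform (G.A i) x + dotp (G.b i) x + G.c i) /
      ∑ j, Real.exp (qform (G.A j) x + dotp (G.b j) x + G.c j)) * h x (G.η i)

/-- All parameters of the mixing measure lie in `Θ`. -/
def inClassP {d q k : ℕ}
    (Θ : Set ((Fin d → Fin d → ℝ) × (Fin d → ℝ) × ℝ × (Fin q → ℝ)))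
    (G : PolyMix d q k) : Prop :=
  ∀ i, (G.A i, G.b i, G.c i, G.η i) ∈ Θ

/-- `L²(μ)` norm of a function. -/
def l2norm {d : ℕ} (μ : Measure (Fin d → ℝ)) (f : (Fin d → ℝ) → ℝ) : ℝ :=
  Real.sqrt (∫ x, f x ^ 2 ∂μ)

/-! ### Auxiliary lemmas -/

lemma exp_diff_le {a b S : ℝ} (ha : a ≤ S) (hb : b ≤ S) :
    |Real.exp a - Real.exp b| ≤ Real.exp S * |a - b| := by
  wlog hab : b ≤ a generalizing a b
  · have := this hb ha (le_of_not_ge hab)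
    rwa [abs_sub_comm, abs_sub_comm a b]
  rw [abs_of_nonneg (sub_nonneg.2 (Real.exp_le_exp.2 hab)), abs_of_nonneg (sub_nonneg.2 hab)]
  have h1 : 1 - (a - b) ≤ Real.exp (b - a) := by
    have := Real.add_one_le_exp (b - a); linarith
  have h2 : Real.exp a * Real.exp (b - a) = Real.exp b := by
    rw [← Real.exp_add]; ring_nf
  have h3 : Real.exp a ≤ Real.exp S := Real.exp_le_exp.2 ha
  nlinarith [Real.exp_pos a, Real.exp_pos (b-a)]

lemma qform_abs_le {d : ℕ} {A : Fin d → Fin d → ℝ} {x : Fin d → ℝ} {R B : ℝ}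
    (hB : 0 ≤ B) (hA : ∀ u v, |A u v| ≤ R) (hx : ∀ u, |x u| ≤ B) :
    |qform A x| ≤ (d:ℝ)^2 * R * B^2 := by
  calc |qform A x| ≤ ∑ u, ∑ v, |A u v * x u * x v| := by
        refine le_trans (Finset.abs_sum_le_sum_abs _ _) ?_
        exact Finset.sum_le_sum fun u _ => Finset.abs_sum_le_sum_abs _ _
    _ ≤ ∑ _u : Fin d, ∑ _v : Fin d, R * B * B := by
        refine Finset.sum_le_sum fun u _ => Finset.sum_le_sum fun v _ => ?_
        rw [abs_mul, abs_mul]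
        have hR : (0:ℝ) ≤ R := le_trans (abs_nonneg _) (hA u v)
        have h3 : |A u v| * |x u| ≤ R * B := mul_le_mul (hA u v) (hx u) (abs_nonneg _) hR
        exact mul_le_mul h3 (hx v) (abs_nonneg _) (by positivity)
    _ = (d:ℝ)^2 * R * B^2 := by simp [Finset.sum_const]; ring

lemma dotp_abs_le {d : ℕ} {b x : Fin d → ℝ} {R B : ℝ}
    (hA : ∀ u, |b u| ≤ R) (hx : ∀ u, |x u| ≤ B) :
    |dotp b x| ≤ (d:ℝ) * R * B := by
  calc |dotp b x| ≤ ∑ u, |b u * x u| := Finset.abs_sum_le_sum_abs _ _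
    _ ≤ ∑ _u : Fin d, R * B := by
        refine Finset.sum_le_sum fun u _ => ?_
        rw [abs_mul]
        exact mul_le_mul (hA u) (hx u) (abs_nonneg _) (le_trans (abs_nonneg _) (hA u))
    _ = (d:ℝ) * R * B := by simp [Finset.sum_const]; ring

lemma qform_sub {d : ℕ} (A A' : Fin d → Fin d → ℝ) (x : Fin d → ℝ) :
    qform A x - qform A' x = qform (fun u v => A u v - A' u v) x := by
  simp [qform, ← Finset.sum_sub_distrib]; congr 1; ext u; congr 1; ext v; ring

lemma dotp_sub {d : ℕ} (b b' x : Fin d → ℝ) :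
    dotp b x - dotp b' x = dotp (fun u => b u - b' u) x := by
  simp [dotp, ← Finset.sum_sub_distrib]; congr 1; ext u; ring

lemma softmax_l1_diff {k : ℕ} (hk : 0 < k) (s s' : Fin k → ℝ) {S Δ : ℝ}
    (hs : ∀ i, |s i| ≤ S) (hs' : ∀ i, |s' i| ≤ S) (hd : ∀ i, |s i - s' i| ≤ Δ) :
    ∑ i, |Real.exp (s i) / (∑ j, Real.exp (s j)) -
        Real.exp (s' i) / (∑ j, Real.exp (s' j))| ≤ 2 * Real.exp (2*S) * Δ := by
  have i0 : Fin k := ⟨0, hk⟩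
  have hΔ : 0 ≤ Δ := le_trans (abs_nonneg _) (hd i0)
  set T := ∑ j, Real.exp (s j) with hT
  set T' := ∑ j, Real.exp (s' j) with hT'
  have hTpos : 0 < T := Finset.sum_pos (fun j _ => Real.exp_pos _) ⟨i0, Finset.mem_univ _⟩
  have hT'pos : 0 < T' := Finset.sum_pos (fun j _ => Real.exp_pos _) ⟨i0, Finset.mem_univ _⟩
  have hTlb : (k:ℝ) * Real.exp (-S) ≤ T := by
    have : ∑ _j : Fin k, Real.exp (-S) ≤ T :=
      Finset.sum_le_sum fun j _ => Real.exp_le_exp.2 ((abs_le.1 (hs j)).1)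
    simpa using this
  have hae : ∀ i, |Real.exp (s i) - Real.exp (s' i)| ≤ Real.exp S * Δ := fun i =>
    le_trans (exp_diff_le (le_of_abs_le (hs i)) (le_of_abs_le (hs' i)))
      (mul_le_mul_of_nonneg_left (hd i) (Real.exp_pos S).le)
  have hTT' : |T' - T| ≤ (k:ℝ) * (Real.exp S * Δ) := by
    have : |∑ j, (Real.exp (s' j) - Real.exp (s j))| ≤ ∑ j, |Real.exp (s' j) - Real.exp (s j)| :=
      Finset.abs_sum_le_sum_abs _ _
    rw [Finset.sum_sub_distrib] at this
    refine le_trans this ?_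
    calc ∑ j, |Real.exp (s' j) - Real.exp (s j)| ≤ ∑ _j : Fin k, Real.exp S * Δ :=
          Finset.sum_le_sum fun j _ => by rw [abs_sub_comm]; exact hae j
      _ = (k:ℝ) * (Real.exp S * Δ) := by simp [Finset.sum_const]
  have key : ∀ i, |Real.exp (s i)/T - Real.exp (s' i)/T'| ≤
      ((Real.exp S * Δ) * T' + Real.exp (s' i) * ((k:ℝ) * (Real.exp S * Δ))) / (T * T') := by
    intro i
    have heq : Real.exp (s i)/T - Real.exp (s' i)/T' =
        ((Real.exp (s i) - Real.exp (s' i)) * T' + Real.exp (s' i) * (T' - T)) / (T * T') := by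
      field_simp; ring
    rw [heq, abs_div, abs_of_pos (mul_pos hTpos hT'pos)]
    have hnum : |(Real.exp (s i) - Real.exp (s' i)) * T' + Real.exp (s' i) * (T' - T)| ≤
        (Real.exp S * Δ) * T' + Real.exp (s' i) * ((k:ℝ) * (Real.exp S * Δ)) := by
      refine le_trans (abs_add_le _ _) ?_
      rw [abs_mul, abs_mul, abs_of_pos hT'pos, abs_of_pos (Real.exp_pos _)]
      have h1 := mul_le_mul_of_nonneg_right (hae i) hT'pos.le
      have h2 := mul_le_mul_of_nonneg_left hTT' (Real.exp_pos (s' i)).le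
      linarith
    gcongr
  calc ∑ i, |Real.exp (s i)/T - Real.exp (s' i)/T'| ≤
      ∑ i, ((Real.exp S * Δ) * T' + Real.exp (s' i) * ((k:ℝ) * (Real.exp S * Δ))) / (T * T') :=
        Finset.sum_le_sum fun i _ => key i
    _ = ((k:ℝ) * ((Real.exp S * Δ) * T') + T' * ((k:ℝ) * (Real.exp S * Δ))) / (T * T') := by
        rw [← Finset.sum_div, Finset.sum_add_distrib, ← Finset.sum_mul, Finset.sum_const]
        simp only [card_univ, Fintype.card_fin, nsmul_eq_mul, ← hT']
        rw [← Finset.sum_mul, ← hT']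
        ring
    _ = 2 * (k:ℝ) * (Real.exp S * Δ) / T := by
        field_simp
        ring
    _ ≤ 2 * (k:ℝ) * (Real.exp S * Δ) / ((k:ℝ) * Real.exp (-S)) := by
        apply div_le_div_of_nonneg_left ?_ (by positivity) hTlb
        positivity
    _ = 2 * Real.exp (2*S) * Δ := by
        have hk' : (k:ℝ) ≠ 0 := Nat.cast_ne_zero.2 hk.ne'
        have he : Real.exp (2*S) = Real.exp S * Real.exp S := by
          rw [← Real.exp_add]; ring_nf
        rw [he, Real.exp_neg]
        field_simp

lemma softmax_sum_one {k : ℕ} (hk : 0 < k) (s : Fin k → ℝ) :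
    ∑ i, Real.exp (s i) / (∑ j, Real.exp (s j)) = 1 := by
  rw [← Finset.sum_div, div_self]
  exact (Finset.sum_pos (fun j _ => Real.exp_pos _) ⟨⟨0, hk⟩, Finset.mem_univ _⟩).ne'

lemma polyMoE_abs_le {d q k : ℕ} (hk : 0 < k) (h : (Fin d → ℝ) → (Fin q → ℝ) → ℝ)
    {M : ℝ} (hbd : ∀ x η, |h x η| ≤ M) (G : PolyMix d q k) (x : Fin d → ℝ) :
    |polyMoE h G x| ≤ M := by
  set s : Fin k → ℝ := fun i => qform (G.A i) x + dotp (G.b i) x + G.c i with hs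
  have hTpos : 0 < ∑ j, Real.exp (s j) :=
    Finset.sum_pos (fun j _ => Real.exp_pos _) ⟨⟨0, hk⟩, Finset.mem_univ _⟩
  have hwpos : ∀ i, 0 ≤ Real.exp (s i) / (∑ j, Real.exp (s j)) :=
    fun i => div_nonneg (Real.exp_pos _).le hTpos.le
  calc |polyMoE h G x| ≤ ∑ i, |(Real.exp (s i) / (∑ j, Real.exp (s j))) * h x (G.η i)| :=
        Finset.abs_sum_le_sum_abs _ _
    _ ≤ ∑ i, (Real.exp (s i) / (∑ j, Real.exp (s j))) * M := by
        refine Finset.sum_le_sum fun i _ => ?_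
        rw [abs_mul, abs_of_nonneg (hwpos i)]
        exact mul_le_mul_of_nonneg_left (hbd x (G.η i)) (hwpos i)
    _ = M := by rw [← Finset.sum_mul, softmax_sum_one hk, one_mul]

lemma polyMoE_param_lip {d q k : ℕ} (hk : 0 < k) (h : (Fin d → ℝ) → (Fin q → ℝ) → ℝ)
    {M L B R δ : ℝ} (hL : 0 ≤ L) (hB : 0 ≤ B) (hδ : 0 ≤ δ)
    (hbd : ∀ x η, |h x η| ≤ M)
    (hLip : ∀ x η₁ η₂, |h x η₁ - h x η₂| ≤ L * ‖η₁ - η₂‖)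
    (G G' : PolyMix d q k)
    (hGA : ∀ i u v, |G.A i u v| ≤ R) (hGb : ∀ i u, |G.b i u| ≤ R) (hGc : ∀ i, |G.c i| ≤ R)
    (hGA' : ∀ i u v, |G'.A i u v| ≤ R) (hGb' : ∀ i u, |G'.b i u| ≤ R) (hGc' : ∀ i, |G'.c i| ≤ R)
    (hdA : ∀ i u v, |G.A i u v - G'.A i u v| ≤ δ) (hdb : ∀ i u, |G.b i u - G'.b i u| ≤ δ)
    (hdc : ∀ i, |G.c i - G'.c i| ≤ δ) (hdη : ∀ i r, |G.η i r - G'.η i r| ≤ δ)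
    (x : Fin d → ℝ) (hx : ‖x‖ ≤ B) :
    |polyMoE h G x - polyMoE h G' x| ≤
      (2 * M * Real.exp (2*(((d:ℝ)^2*B^2 + (d:ℝ)*B + 1)*R)) *
        ((d:ℝ)^2*B^2 + (d:ℝ)*B + 1) + L) * δ := by
  have hM : 0 ≤ M := le_trans (abs_nonneg _) (hbd x (G.η ⟨0, hk⟩))
  set P : ℝ := (d:ℝ)^2*B^2 + (d:ℝ)*B + 1 with hP
  have hxu : ∀ u, |x u| ≤ B := fun u => by
    have := norm_le_pi_norm x u
    simp only [Real.norm_eq_abs] at this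
    exact le_trans this hx
  set s : Fin k → ℝ := fun i => qform (G.A i) x + dotp (G.b i) x + G.c i with hsdef
  set s' : Fin k → ℝ := fun i => qform (G'.A i) x + dotp (G'.b i) x + G'.c i with hs'def
  have hsb : ∀ (H : PolyMix d q k), (∀ i u v, |H.A i u v| ≤ R) → (∀ i u, |H.b i u| ≤ R) →
      (∀ i, |H.c i| ≤ R) → ∀ i, |qform (H.A i) x + dotp (H.b i) x + H.c i| ≤ P * R := by
    intro H hA hb hc i
    have h1 := qform_abs_le hB (hA i) hxu
    have h2 := dotp_abs_le (hb i) hxu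
    have h3 := hc i
    have t1 := abs_add_le (qform (H.A i) x + dotp (H.b i) x) (H.c i)
    have t2 := abs_add_le (qform (H.A i) x) (dotp (H.b i) x)
    have hfin : |qform (H.A i) x + dotp (H.b i) x + H.c i| ≤
        ((d:ℝ)^2 * R * B^2 + (d:ℝ) * R * B) + R :=
      le_trans t1 (add_le_add (le_trans t2 (add_le_add h1 h2)) h3)
    exact le_trans hfin (le_of_eq (by rw [hP]; ring))
  have hs : ∀ i, |s i| ≤ P * R := hsb G hGA hGb hGc
  have hs' : ∀ i, |s' i| ≤ P * R := hsb G' hGA' hGb' hGc'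
  have hds : ∀ i, |s i - s' i| ≤ P * δ := by
    intro i
    have e1 : s i - s' i = (qform (G.A i) x - qform (G'.A i) x) +
        ((dotp (G.b i) x - dotp (G'.b i) x) + (G.c i - G'.c i)) := by
      simp only [hsdef, hs'def]; ring
    rw [e1, qform_sub, dotp_sub]
    have h1 : |qform (fun u v => G.A i u v - G'.A i u v) x| ≤ (d:ℝ)^2 * δ * B^2 :=
      qform_abs_le hB (fun u v => hdA i u v) hxu
    have h2 : |dotp (fun u => G.b i u - G'.b i u) x| ≤ (d:ℝ) * δ * B :=
      dotp_abs_le (fun u => hdb i u) hxu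
    have h3 := hdc i
    have t1 := abs_add_le (qform (fun u v => G.A i u v - G'.A i u v) x)
      ((dotp (fun u => G.b i u - G'.b i u) x) + (G.c i - G'.c i))
    have t2 := abs_add_le (dotp (fun u => G.b i u - G'.b i u) x) (G.c i - G'.c i)
    have hfin : |qform (fun u v => G.A i u v - G'.A i u v) x +
        (dotp (fun u => G.b i u - G'.b i u) x + (G.c i - G'.c i))| ≤
        (d:ℝ)^2 * δ * B^2 + ((d:ℝ) * δ * B + δ) :=
      le_trans t1 (add_le_add h1 (le_trans t2 (add_le_add h2 h3)))
    exact le_trans hfin (le_of_eq (by rw [hP]; ring))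
  set T := ∑ j, Real.exp (s j) with hT
  set T' := ∑ j, Real.exp (s' j) with hT'
  have hT'pos : 0 < T' :=
    Finset.sum_pos (fun j _ => Real.exp_pos _) ⟨⟨0, hk⟩, Finset.mem_univ _⟩
  have hw' : ∀ i, 0 ≤ Real.exp (s' i) / T' := fun i => div_nonneg (Real.exp_pos _).le hT'pos.le
  have hηd : ∀ i, ‖G.η i - G'.η i‖ ≤ δ := by
    intro i
    refine (pi_norm_le_iff_of_nonneg hδ).2 fun r => ?_
    simpa [Real.norm_eq_abs] using hdη i r
  have hsplit : polyMoE h G x - polyMoE h G' x =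
      ∑ i, ((Real.exp (s i) / T - Real.exp (s' i) / T') * h x (G.η i) +
        (Real.exp (s' i) / T') * (h x (G.η i) - h x (G'.η i))) := by
    simp only [polyMoE, ← hT, ← hT', ← Finset.sum_sub_distrib]
    exact Finset.sum_congr rfl fun i _ => by ring
  have hsum1 : ∑ i, Real.exp (s' i) / T' = 1 := softmax_sum_one hk s'
  have hl1 : ∑ i, |Real.exp (s i) / T - Real.exp (s' i) / T'| ≤
      2 * Real.exp (2*(P*R)) * (P * δ) := softmax_l1_diff hk s s' hs hs' hds
  calc |polyMoE h G x - polyMoE h G' x| ≤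
      ∑ i, |(Real.exp (s i) / T - Real.exp (s' i) / T') * h x (G.η i) +
        (Real.exp (s' i) / T') * (h x (G.η i) - h x (G'.η i))| := by
        rw [hsplit]; exact Finset.abs_sum_le_sum_abs _ _
    _ ≤ ∑ i, (|Real.exp (s i) / T - Real.exp (s' i) / T'| * M +
        (Real.exp (s' i) / T') * (L * δ)) := by
        refine Finset.sum_le_sum fun i _ => ?_
        refine le_trans (abs_add_le _ _) ?_
        have e1 : |(Real.exp (s i) / T - Real.exp (s' i) / T') * h x (G.η i)| ≤
            |Real.exp (s i) / T - Real.exp (s' i) / T'| * M := by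
          rw [abs_mul]
          exact mul_le_mul_of_nonneg_left (hbd x (G.η i)) (abs_nonneg _)
        have e2 : |(Real.exp (s' i) / T') * (h x (G.η i) - h x (G'.η i))| ≤
            (Real.exp (s' i) / T') * (L * δ) := by
          rw [abs_mul, abs_of_nonneg (hw' i)]
          refine mul_le_mul_of_nonneg_left ?_ (hw' i)
          exact le_trans (hLip x (G.η i) (G'.η i)) (mul_le_mul_of_nonneg_left (hηd i) hL)
        linarith
    _ = (∑ i, |Real.exp (s i) / T - Real.exp (s' i) / T'|) * M +
        (∑ i, Real.exp (s' i) / T') * (L * δ) := by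
        rw [Finset.sum_add_distrib, ← Finset.sum_mul, ← Finset.sum_mul]
    _ ≤ (2 * Real.exp (2*(P*R)) * (P * δ)) * M + 1 * (L * δ) := by
        rw [hsum1]
        exact add_le_add (mul_le_mul_of_nonneg_right hl1 hM) le_rfl
    _ = (2 * M * Real.exp (2*(P*R)) * P + L) * δ := by ring

def gridPt (R : ℝ) (n : ℕ) (j : Fin n) : ℝ := -R + 2*R*(j:ℝ)/(n:ℝ)

lemma gridPt_abs_le {R : ℝ} (hR : 0 ≤ R) {n : ℕ} (hn : 0 < n) (j : Fin n) :
    |gridPt R n j| ≤ R := by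
  have hn' : (0:ℝ) < n := Nat.cast_pos.2 hn
  have hj : (j:ℝ) ≤ (n:ℝ) := by exact_mod_cast (j.2.le)
  have hj0 : (0:ℝ) ≤ (j:ℝ) := Nat.cast_nonneg _
  rw [abs_le, gridPt]
  constructor
  · have : 0 ≤ 2*R*(j:ℝ)/(n:ℝ) := by positivity
    linarith
  · have h1 : 2*R*(j:ℝ)/(n:ℝ) ≤ 2*R := by
      rw [div_le_iff₀ hn']
      nlinarith
    linarith

lemma grid_exists {R : ℝ} (hR : 0 < R) {n : ℕ} (hn : 0 < n) {t : ℝ} (ht : |t| ≤ R) :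
    ∃ j : Fin n, |t - gridPt R n j| ≤ 2*R/n := by
  have hn' : (0:ℝ) < n := Nat.cast_pos.2 hn
  set u : ℝ := (t + R) / (2*R) with hu
  have hu0 : 0 ≤ u := by
    have := (abs_le.1 ht).1
    apply div_nonneg (by linarith) (by linarith)
  have hu1 : u ≤ 1 := by
    have := (abs_le.1 ht).2
    rw [hu, div_le_one (by linarith)]
    linarith
  have ht' : t = -R + 2*R*u := by
    rw [hu]; field_simp; ring
  by_cases hc : ⌊u * n⌋₊ < n
  · refine ⟨⟨⌊u * n⌋₊, hc⟩, ?_⟩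
    have hfl : (⌊u * n⌋₊ : ℝ) ≤ u * n := Nat.floor_le (by positivity)
    have hfu : u * n < ⌊u * n⌋₊ + 1 := Nat.lt_floor_add_one _
    rw [gridPt, ht']
    simp only
    have hexpr : -R + 2 * R * u - (-R + 2 * R * (⌊u * ↑n⌋₊:ℝ) / n) =
        (2*R*(u*↑n - (⌊u * ↑n⌋₊:ℝ))) / n := by field_simp; ring
    rw [hexpr, abs_le]
    have hnum0 : 0 ≤ 2*R*(u*↑n - (⌊u * ↑n⌋₊:ℝ)) := by nlinarith
    constructor
    · have : 0 ≤ 2*R*(u*↑n - (⌊u * ↑n⌋₊:ℝ)) / n := div_nonneg hnum0 hn'.le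
      have h2Rn : 0 ≤ 2*R/(n:ℝ) := by positivity
      linarith
    · have h2 : 2*R*(u*↑n - (⌊u * ↑n⌋₊:ℝ)) ≤ 2*R := by nlinarith
      gcongr
  · push_neg at hc
    have h1 : (n:ℝ) ≤ u * n := by
      have := (Nat.le_floor_iff (by positivity : (0:ℝ) ≤ u * n)).1 hc
      exact_mod_cast this
    have hun : u = 1 := by nlinarith
    refine ⟨⟨n-1, by omega⟩, ?_⟩
    rw [gridPt, ht', hun]
    have hcast : ((⟨n-1, by omega⟩ : Fin n) : ℝ) = (n:ℝ) - 1 := by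
      have : ((n-1:ℕ):ℝ) = (n:ℝ)-1 := by
        rw [Nat.cast_sub hn]; simp
      simpa using this
    rw [hcast]
    have heq : -R + 2 * R * 1 - (-R + 2 * R * ((n:ℝ) - 1) / n) = 2*R/n := by
      field_simp; ring
    rw [heq, abs_of_nonneg (by positivity)]

lemma bracket_l2 {d : ℕ} (μ : Measure (Fin d → ℝ)) [IsProbabilityMeasure μ] {B ε : ℝ}
    (hε : 0 ≤ ε) (hsupp : ∀ᵐ x ∂μ, ‖x‖ ≤ B) (f : (Fin d → ℝ) → ℝ) (M' : ℝ) :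
    l2norm μ (fun x => (if ‖x‖ ≤ B then f x + ε/2 else M') -
      (if ‖x‖ ≤ B then f x - ε/2 else -M')) ≤ ε := by
  have hae : (fun x => ((if ‖x‖ ≤ B then f x + ε/2 else M') -
      (if ‖x‖ ≤ B then f x - ε/2 else -M'))^2) =ᵐ[μ] fun _ => ε^2 := by
    filter_upwards [hsupp] with x hx
    simp only [if_pos hx]
    ring
  rw [l2norm, integral_congr_ae hae, integral_const]
  simp [measure_univ]
  exact le_of_eq (Real.sqrt_sq hε)

set_option maxHeartbeats 2000000 in
/-- **Theorem (bracketing entropy of the MoE class `F_N(Θ)`).** If the expert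
function is bounded and Lipschitz in `η` uniformly in `x`, `Θ` is compact and
`μ` has bounded support, then for every `ε ∈ (0,1/2]` the class `F_N(Θ)` can be
covered by at most `(C/ε)^{C'}` brackets `[L_i, U_i]` with
`‖U_i − L_i‖_{L²(μ)} ≤ ε`; equivalently
`H_B(ε, F_N(Θ), ‖·‖_{L²(μ)}) ≲ log(1/ε)`. -/
theorem poly_moe_bracketing_entropy
    {d q N : ℕ} (h : (Fin d → ℝ) → (Fin q → ℝ) → ℝ) (M L B : ℝ)
    (hbd : ∀ (x : Fin d → ℝ) (η : Fin q → ℝ), |h x η| ≤ M)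
    (hLip : ∀ (x : Fin d → ℝ) (η₁ η₂ : Fin q → ℝ), |h x η₁ - h x η₂| ≤ L * ‖η₁ - η₂‖)
    (Θ : Set ((Fin d → Fin d → ℝ) × (Fin d → ℝ) × ℝ × (Fin q → ℝ)))
    (hΘ : IsCompact Θ) (hN : 1 ≤ N)
    (μ : Measure (Fin d → ℝ)) [IsProbabilityMeasure μ]
    (hsupp : ∀ᵐ x ∂μ, ‖x‖ ≤ B) :
    ∃ C > 0, ∃ C' > 0, ∀ ε : ℝ, 0 < ε → ε ≤ 1 / 2 →
      ∃ m : ℕ, ∃ Lo Up : Fin m → (Fin d → ℝ) → ℝ,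
        (m : ℝ) ≤ (C / ε) ^ C' ∧
        (∀ i, (∀ x, Lo i x ≤ Up i x) ∧ l2norm μ (fun x => Up i x - Lo i x) ≤ ε) ∧
        ∀ k : ℕ, 1 ≤ k → k ≤ N → ∀ G : PolyMix d q k, inClassP Θ G →
          ∃ i, ∀ x : Fin d → ℝ, Lo i x ≤ polyMoE h G x ∧ polyMoE h G x ≤ Up i x := by
  classical
  -- basic nonnegativity
  have hM : 0 ≤ M := le_trans (abs_nonneg _) (hbd (fun _ => 0) (fun _ => 0))
  set L₀ : ℝ := max L 0 with hL₀def
  have hL₀ : 0 ≤ L₀ := le_max_right _ _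
  have hLip₀ : ∀ (x : Fin d → ℝ) (η₁ η₂ : Fin q → ℝ),
      |h x η₁ - h x η₂| ≤ L₀ * ‖η₁ - η₂‖ := fun x η₁ η₂ =>
    le_trans (hLip x η₁ η₂) (mul_le_mul_of_nonneg_right (le_max_left _ _) (norm_nonneg _))
  set B₀ : ℝ := max B 0 with hB₀def
  have hB₀ : 0 ≤ B₀ := le_max_right _ _
  have hsupp₀ : ∀ᵐ x ∂μ, ‖x‖ ≤ B₀ := hsupp.mono fun x hx => le_trans hx (le_max_left _ _)
  -- bound on the parameter set
  obtain ⟨R₀, hR₀⟩ := hΘ.isBounded.exists_norm_le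
  set R : ℝ := max R₀ 1 with hRdef
  have hR : 0 < R := lt_of_lt_of_le one_pos (le_max_right _ _)
  have hΘR : ∀ p ∈ Θ, ‖p‖ ≤ R := fun p hp => le_trans (hR₀ p hp) (le_max_left _ _)
  -- Lipschitz constant
  set P : ℝ := (d:ℝ)^2*B₀^2 + (d:ℝ)*B₀ + 1 with hPdef
  have hP : 0 < P := by positivity
  set K : ℝ := 2 * M * Real.exp (2*(P*R)) * P + L₀ + 1 with hKdef
  have hK1 : 1 ≤ K := by
    have : 0 ≤ 2 * M * Real.exp (2*(P*R)) * P := by positivity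
    rw [hKdef]; linarith
  have hK : 0 < K := lt_of_lt_of_le one_pos hK1
  -- constants
  set C : ℝ := 4*R*K + 1 + N with hCdef
  have hC : 0 < C := by positivity
  set E : ℕ := d*d*N + (d*N + (N + q*N)) with hEdef
  refine ⟨C, hC, E + 1, Nat.succ_pos _, ?_⟩
  intro ε hε hε2
  have hεinv : 1 ≤ 1/ε := by rw [le_div_iff₀ hε]; linarith
  -- grid size
  set n : ℕ := ⌈4*R*K/ε⌉₊ with hndef
  have hn : 0 < n := Nat.ceil_pos.2 (by positivity)
  have hn' : (0:ℝ) < n := Nat.cast_pos.2 hn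
  have hnle : (n:ℝ) ≤ C/ε := by
    have h1 : (n:ℝ) ≤ 4*R*K/ε + 1 := le_of_lt (Nat.ceil_lt_add_one (by positivity))
    have h2 : (1:ℝ) ≤ 1/ε := hεinv
    have h3 : (0:ℝ) ≤ N := Nat.cast_nonneg _
    have : 4*R*K/ε + 1 ≤ C/ε := by
      rw [hCdef, add_div, add_div]
      have : (1:ℝ)/ε ≥ 1 := hεinv
      have hNε : 0 ≤ (N:ℝ)/ε := by positivity
      linarith
    linarith
  have hCε1 : 1 ≤ C/ε := le_trans (by exact_mod_cast hn) hnle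
  have c1 : Fintype.card (Fin N → Fin d → Fin d → Fin n) = n ^ (d*d*N) := by
    calc Fintype.card (Fin N → Fin d → Fin d → Fin n)
        = Fintype.card (Fin d → Fin d → Fin n) ^ N := by
          rw [Fintype.card_fun, Fintype.card_fin]
      _ = (Fintype.card (Fin d → Fin n) ^ d) ^ N := by
          rw [Fintype.card_fun, Fintype.card_fin]
      _ = ((n ^ d) ^ d) ^ N := by
          rw [Fintype.card_fun, Fintype.card_fin, Fintype.card_fin]
      _ = n ^ (d*d*N) := by rw [← pow_mul, ← pow_mul, mul_assoc]
  have c2 : Fintype.card (Fin N → Fin d → Fin n) = n ^ (d*N) := by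
    calc Fintype.card (Fin N → Fin d → Fin n)
        = Fintype.card (Fin d → Fin n) ^ N := by rw [Fintype.card_fun, Fintype.card_fin]
      _ = (n ^ d) ^ N := by rw [Fintype.card_fun, Fintype.card_fin, Fintype.card_fin]
      _ = n ^ (d*N) := by rw [← pow_mul]
  have c3 : Fintype.card (Fin N → Fin n) = n ^ N := by
    rw [Fintype.card_fun, Fintype.card_fin, Fintype.card_fin]
  have c4 : Fintype.card (Fin N → Fin q → Fin n) = n ^ (q*N) := by
    calc Fintype.card (Fin N → Fin q → Fin n)
        = Fintype.card (Fin q → Fin n) ^ N := by rw [Fintype.card_fun, Fintype.card_fin]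
      _ = (n ^ q) ^ N := by rw [Fintype.card_fun, Fintype.card_fin, Fintype.card_fin]
      _ = n ^ (q*N) := by rw [← pow_mul]
  have hcard : Fintype.card (Fin N × ((Fin N → Fin d → Fin d → Fin n) × (Fin N → Fin d → Fin n) × (Fin N → Fin n) × (Fin N → Fin q → Fin n))) = N * n ^ E := by
    rw [Fintype.card_prod, Fintype.card_prod, Fintype.card_prod, Fintype.card_prod,
      c1, c2, c3, c4, Fintype.card_fin, hEdef, pow_add, pow_add, pow_add]
  obtain ⟨m, hmcard, ⟨e⟩⟩ : ∃ m : ℕ, Fintype.card (Fin N × ((Fin N → Fin d → Fin d → Fin n) × (Fin N → Fin d → Fin n) × (Fin N → Fin n) × (Fin N → Fin q → Fin n))) = m ∧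
      Nonempty ((Fin N × ((Fin N → Fin d → Fin d → Fin n) × (Fin N → Fin d → Fin n) × (Fin N → Fin n) × (Fin N → Fin q → Fin n))) ≃ Fin m) :=
    ⟨_, rfl, ⟨Fintype.equivFin _⟩⟩
  -- the approximating mixtures
  have hk0 : ∀ kF : Fin N, kF.val + 1 ≤ N := fun kF => kF.2
  set mix : (Fin N × ((Fin N → Fin d → Fin d → Fin n) × (Fin N → Fin d → Fin n) × (Fin N → Fin n) × (Fin N → Fin q → Fin n))) → (kF : Fin N) → PolyMix d q (kF.val + 1) := fun idx kF =>
    { A := fun i u v => gridPt R n (idx.2.1 (Fin.castLE (hk0 kF) i) u v)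
      b := fun i u => gridPt R n (idx.2.2.1 (Fin.castLE (hk0 kF) i) u)
      c := fun i => gridPt R n (idx.2.2.2.1 (Fin.castLE (hk0 kF) i))
      η := fun i r => gridPt R n (idx.2.2.2.2 (Fin.castLE (hk0 kF) i) r) } with hmixdef
  set f0 : (Fin N × ((Fin N → Fin d → Fin d → Fin n) × (Fin N → Fin d → Fin n) × (Fin N → Fin n) × (Fin N → Fin q → Fin n))) → (Fin d → ℝ) → ℝ := fun idx => polyMoE h (mix idx idx.1) with hf0def
  set Lo : Fin m → (Fin d → ℝ) → ℝ := fun i x =>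
    if ‖x‖ ≤ B₀ then f0 (e.symm i) x - ε/2 else -M with hLodef
  set Up : Fin m → (Fin d → ℝ) → ℝ := fun i x =>
    if ‖x‖ ≤ B₀ then f0 (e.symm i) x + ε/2 else M with hUpdef
  refine ⟨m, Lo, Up, ?_, ?_, ?_⟩
  · -- cardinality bound
    have h1 : (m:ℝ) = (N:ℝ) * (n:ℝ)^E := by
      rw [← hmcard, hcard]; push_cast; ring
    have h2 : (n:ℝ)^E ≤ (C/ε)^E := pow_le_pow_left₀ hn'.le hnle E
    have h3 : (N:ℝ) ≤ C/ε := by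
      have hNC : (N:ℝ) ≤ C := by
        have h4 : 0 ≤ 4*R*K := by positivity
        rw [hCdef]; linarith
      have hCC : C ≤ C/ε := by
        rw [le_div_iff₀ hε]; nlinarith
      linarith
    calc (m:ℝ) = (N:ℝ) * (n:ℝ)^E := h1
      _ ≤ (C/ε) * (C/ε)^E := mul_le_mul h3 h2 (by positivity) (by positivity)
      _ = (C/ε)^(E+1) := by rw [pow_succ]; ring
  · -- brackets are valid
    intro i
    constructor
    · intro x
      simp only [hLodef, hUpdef]
      split_ifs
      · linarith
      · linarith
    · exact bracket_l2 μ hε.le hsupp₀ (f0 (e.symm i)) M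
  · -- covering
    intro k hk1 hkN G hG
    obtain ⟨kk, rfl⟩ : ∃ kk, k = kk + 1 := ⟨k - 1, by omega⟩
    set kF : Fin N := ⟨kk, by omega⟩ with hkFdef
    -- coordinate bounds for G
    have hcoord : ∀ i : Fin (kk+1), ‖(G.A i, G.b i, G.c i, G.η i)‖ ≤ R := fun i => hΘR _ (hG i)
    have hA : ∀ i u v, |G.A i u v| ≤ R := by
      intro i u v
      calc |G.A i u v| = ‖(G.A i, G.b i, G.c i, G.η i).1 u v‖ := (Real.norm_eq_abs _).symm
        _ ≤ ‖(G.A i, G.b i, G.c i, G.η i).1 u‖ := norm_le_pi_norm _ v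
        _ ≤ ‖(G.A i, G.b i, G.c i, G.η i).1‖ := norm_le_pi_norm _ u
        _ ≤ ‖(G.A i, G.b i, G.c i, G.η i)‖ := norm_fst_le _
        _ ≤ R := hcoord i
    have hb : ∀ i u, |G.b i u| ≤ R := by
      intro i u
      calc |G.b i u| = ‖(G.A i, G.b i, G.c i, G.η i).2.1 u‖ := (Real.norm_eq_abs _).symm
        _ ≤ ‖(G.A i, G.b i, G.c i, G.η i).2.1‖ := norm_le_pi_norm _ u
        _ ≤ ‖(G.A i, G.b i, G.c i, G.η i).2‖ := norm_fst_le _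
        _ ≤ ‖(G.A i, G.b i, G.c i, G.η i)‖ := norm_snd_le _
        _ ≤ R := hcoord i
    have hc : ∀ i, |G.c i| ≤ R := by
      intro i
      calc |G.c i| = ‖(G.A i, G.b i, G.c i, G.η i).2.2.1‖ := (Real.norm_eq_abs _).symm
        _ ≤ ‖(G.A i, G.b i, G.c i, G.η i).2.2‖ := norm_fst_le _
        _ ≤ ‖(G.A i, G.b i, G.c i, G.η i).2‖ := norm_snd_le _
        _ ≤ ‖(G.A i, G.b i, G.c i, G.η i)‖ := norm_snd_le _
        _ ≤ R := hcoord i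
    have hη : ∀ i r, |G.η i r| ≤ R := by
      intro i r
      calc |G.η i r| = ‖(G.A i, G.b i, G.c i, G.η i).2.2.2 r‖ := (Real.norm_eq_abs _).symm
        _ ≤ ‖(G.A i, G.b i, G.c i, G.η i).2.2.2‖ := norm_le_pi_norm _ r
        _ ≤ ‖(G.A i, G.b i, G.c i, G.η i).2.2‖ := norm_snd_le _
        _ ≤ ‖(G.A i, G.b i, G.c i, G.η i).2‖ := norm_snd_le _
        _ ≤ ‖(G.A i, G.b i, G.c i, G.η i)‖ := norm_snd_le _
        _ ≤ R := hcoord i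
    -- grid selection
    set αsel : Fin N → Fin d → Fin d → Fin n := fun i u v =>
      if hi : i.val < kk + 1 then (grid_exists hR hn (hA ⟨i.val, hi⟩ u v)).choose
      else ⟨0, hn⟩ with hαdef
    set βsel : Fin N → Fin d → Fin n := fun i u =>
      if hi : i.val < kk + 1 then (grid_exists hR hn (hb ⟨i.val, hi⟩ u)).choose
      else ⟨0, hn⟩ with hβdef
    set γsel : Fin N → Fin n := fun i =>
      if hi : i.val < kk + 1 then (grid_exists hR hn (hc ⟨i.val, hi⟩)).choose
      else ⟨0, hn⟩ with hγdef
    set ηsel : Fin N → Fin q → Fin n := fun i r =>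
      if hi : i.val < kk + 1 then (grid_exists hR hn (hη ⟨i.val, hi⟩ r)).choose
      else ⟨0, hn⟩ with hηseldef
    set idx : (Fin N × ((Fin N → Fin d → Fin d → Fin n) × (Fin N → Fin d → Fin n) × (Fin N → Fin n) × (Fin N → Fin q → Fin n))) := (kF, αsel, βsel, γsel, ηsel) with hidxdef
    refine ⟨e idx, ?_⟩
    have hsymm : e.symm (e idx) = idx := Equiv.symm_apply_apply _ _
    -- the approximating mixture for this index
    set G' : PolyMix d q (kk+1) := mix idx kF with hG'def
    -- closeness on the ball
    set δ : ℝ := 2*R/n with hδdef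
    have hδ0 : 0 ≤ δ := by positivity
    have hclose : ∀ x : Fin d → ℝ, ‖x‖ ≤ B₀ → |polyMoE h G x - polyMoE h G' x| ≤ ε/2 := by
      intro x hx
      have hlip := polyMoE_param_lip (Nat.succ_pos kk) h hL₀ hB₀ hδ0 hbd hLip₀ G G'
        hA hb hc
        (fun i u v => gridPt_abs_le hR.le hn _)
        (fun i u => gridPt_abs_le hR.le hn _)
        (fun i => gridPt_abs_le hR.le hn _)
        (fun i u v => by
          have : G'.A i u v = gridPt R n ((grid_exists hR hn (hA i u v)).choose) := by
            simp only [hG'def, hmixdef, hidxdef, hαdef]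
            rw [dif_pos (show (Fin.castLE (hk0 kF) i).val < kk + 1 from i.isLt)]
          rw [this]
          exact (grid_exists hR hn (hA i u v)).choose_spec)
        (fun i u => by
          have : G'.b i u = gridPt R n ((grid_exists hR hn (hb i u)).choose) := by
            simp only [hG'def, hmixdef, hidxdef, hβdef]
            rw [dif_pos (show (Fin.castLE (hk0 kF) i).val < kk + 1 from i.isLt)]
          rw [this]
          exact (grid_exists hR hn (hb i u)).choose_spec)
        (fun i => by
          have : G'.c i = gridPt R n ((grid_exists hR hn (hc i)).choose) := by
            simp only [hG'def, hmixdef, hidxdef, hγdef]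
            rw [dif_pos (show (Fin.castLE (hk0 kF) i).val < kk + 1 from i.isLt)]
          rw [this]
          exact (grid_exists hR hn (hc i)).choose_spec)
        (fun i r => by
          have : G'.η i r = gridPt R n ((grid_exists hR hn (hη i r)).choose) := by
            simp only [hG'def, hmixdef, hidxdef, hηseldef]
            rw [dif_pos (show (Fin.castLE (hk0 kF) i).val < kk + 1 from i.isLt)]
          rw [this]
          exact (grid_exists hR hn (hη i r)).choose_spec)
        x hx
      -- (2 M exp(2 P R) P + L₀) δ ≤ K δ ≤ ε/2
      have hK0 : 2 * M * Real.exp (2*(P*R)) * P + L₀ ≤ K := by rw [hKdef]; linarith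
      have hstep : (2 * M * Real.exp (2*(((d:ℝ)^2*B₀^2 + (d:ℝ)*B₀ + 1)*R)) *
          ((d:ℝ)^2*B₀^2 + (d:ℝ)*B₀ + 1) + L₀) * δ ≤ K * δ := by
        rw [← hPdef]
        exact mul_le_mul_of_nonneg_right hK0 hδ0
      have hnlb : 4*R*K/ε ≤ (n:ℝ) := Nat.le_ceil _
      have hKδ : K * δ ≤ ε/2 := by
        rw [hδdef]
        have h5 : 4*R*K ≤ (n:ℝ) * ε := by
          rw [div_le_iff₀ hε] at hnlb
          linarith
        rw [show K * (2*R/(n:ℝ)) = (2*R*K)/(n:ℝ) from by ring, div_le_iff₀ hn']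
        nlinarith [h5]
      calc |polyMoE h G x - polyMoE h G' x| ≤ _ := hlip
        _ ≤ K * δ := hstep
        _ ≤ ε/2 := hKδ
    -- conclude
    intro x
    have hfG' : f0 (e.symm (e idx)) = polyMoE h G' := by rw [hsymm, hf0def, hG'def]
    by_cases hx : ‖x‖ ≤ B₀
    · have hcl := hclose x hx
      rw [abs_le] at hcl
      constructor
      · rw [hLodef]
        simp only [if_pos hx, hfG']
        linarith [hcl.2]
      · rw [hUpdef]
        simp only [if_pos hx, hfG']
        linarith [hcl.1]
    · have habs := polyMoE_abs_le (Nat.succ_pos kk) h hbd G x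
      rw [abs_le] at habs
      constructor
      · rw [hLodef]; simp only [if_neg hx]; exact habs.1
      · rw [hUpdef]; simp only [if_neg hx]; exact habs.2

end
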